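/- arXiv:0911.3495 — 2 statements merged into one kernel-verified Lean document; each statement's English description precedes it below -/
import Mathlib

section
/- Let R be a commutative ring and A an invertible n×n matrix over R. Then the 2n×2n block diagonal matrix with blocks A and A⁻¹ is a product of elementary matrices. -/
open Matrix

variable {R : Type*} [CommRing R]

/-- Block diagonal sum of square matrices. -/
def blockDiagSum {n m : ℕ} (A : Matrix (Fin n) (Fin n) R) (B : Matrix (Fin m) (Fin m) R) :
    Matrix (Fin (n + m)) (Fin (n + m)) R :=
  Matrix.reindex finSumFinEquiv finSumFinEquiv (Matrix.fromBlocks A 0 0 B)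

/-- The standard symplectic matrix: block diagonal with blocks `[[0,1],[-1,0]]`. -/
def psi (R : Type*) [CommRing R] (n : ℕ) : Matrix (Fin n) (Fin n) R :=
  Matrix.of fun i j =>
    if (i : ℕ) % 2 = 0 ∧ (j : ℕ) = i + 1 then 1
    else if (j : ℕ) % 2 = 0 ∧ (i : ℕ) = j + 1 then -1 else 0

/-- A matrix is elementary if it is the identity plus a single off-diagonal entry. -/
def IsElementary {n : ℕ} (E : Matrix (Fin n) (Fin n) R) : Prop :=
  ∃ i j : Fin n, i ≠ j ∧ ∃ r : R, E = 1 + Matrix.single i j r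

/-- A matrix is a product of elementary matrices. -/
def IsElemProd {n : ℕ} (M : Matrix (Fin n) (Fin n) R) : Prop :=
  ∃ L : List (Matrix (Fin n) (Fin n) R), (∀ E ∈ L, IsElementary E) ∧ L.prod = M

lemma elemProd_mul {n : ℕ} {M N : Matrix (Fin n) (Fin n) R}
    (hM : IsElemProd M) (hN : IsElemProd N) : IsElemProd (M * N) := by
  obtain ⟨L1, h1, rfl⟩ := hM
  obtain ⟨L2, h2, rfl⟩ := hN
  exact ⟨L1 ++ L2,
    by intro E hE; rcases List.mem_append.1 hE with h | h; exacts [h1 E h, h2 E h],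
    by simp⟩

lemma list_sum_toList {ι M : Type*} [AddCommMonoid M] (s : Finset ι) (f : ι → M) :
    (s.toList.map f).sum = ∑ x ∈ s, f x := by
  rw [← Multiset.sum_coe, ← Multiset.map_coe, Finset.coe_toList, Finset.sum]

/-- product of `1 + std (u p) (v p) (f p)` over a list, when no `v` equals any `u`. -/
lemma list_prod_one_add_std {m ι : Type*} [Fintype m] [DecidableEq m]
    (L : List ι) (u v : ι → m) (f : ι → R) (h : ∀ p q, v p ≠ u q) :
    (L.map fun p => (1 : Matrix m m R) + Matrix.single (u p) (v p) (f p)).prod =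
      1 + (L.map fun p => Matrix.single (u p) (v p) (f p)).sum := by
  induction L with
  | nil => simp
  | cons a L ih =>
    rw [List.map_cons, List.prod_cons, ih, List.map_cons, List.sum_cons]
    rw [add_mul, one_mul, mul_add, mul_one]
    have h0 : ∀ L' : List ι, Matrix.single (u a) (v a) (f a) *
        (L'.map fun p => Matrix.single (u p) (v p) (f p)).sum = 0 := by
      intro L'
      induction L' with
      | nil => simp
      | cons b L' ihb =>
        rw [List.map_cons, List.sum_cons, mul_add, ihb,
          Matrix.single_mul_single_of_ne (h := h a b)]
        simp
    rw [h0]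
    abel

/-- `fromBlocks 1 B 0 1` as `1 +` a sum of std basis matrices. -/
lemma upper_eq_one_add {n : ℕ} (B : Matrix (Fin n) (Fin n) R) :
    Matrix.fromBlocks (1 : Matrix (Fin n) (Fin n) R) B 0 1 =
      1 + ∑ p : Fin n × Fin n,
        Matrix.single (Sum.inl p.1 : Fin n ⊕ Fin n) (Sum.inr p.2 : Fin n ⊕ Fin n) (B p.1 p.2) := by
  ext i j
  rcases i with i | i <;> rcases j with j | j <;>
    simp [Matrix.fromBlocks, Matrix.single, Matrix.one_apply, Matrix.sum_apply,
      Fintype.sum_prod_type, ite_and, Finset.sum_ite_eq, Finset.sum_ite_eq']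

lemma lower_eq_one_add {n : ℕ} (C : Matrix (Fin n) (Fin n) R) :
    Matrix.fromBlocks (1 : Matrix (Fin n) (Fin n) R) 0 C 1 =
      1 + ∑ p : Fin n × Fin n,
        Matrix.single (Sum.inr p.1 : Fin n ⊕ Fin n) (Sum.inl p.2 : Fin n ⊕ Fin n) (C p.1 p.2) := by
  ext i j
  rcases i with i | i <;> rcases j with j | j <;>
    simp [Matrix.fromBlocks, Matrix.single, Matrix.one_apply, Matrix.sum_apply,
      Fintype.sum_prod_type, ite_and, Finset.sum_ite_eq, Finset.sum_ite_eq']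

lemma reindex_stdBasisMatrix {m k : Type*} [DecidableEq m] [DecidableEq k]
    (e : m ≃ k) (i j : m) (r : R) :
    Matrix.reindex e e (Matrix.single i j r) = Matrix.single (e i) (e j) r := by
  ext a b
  simp [Matrix.single, Equiv.eq_symm_apply, eq_comm]

/-- reindex of a product of `1 + std` matrices (with suitable index functions) is elem prod -/
lemma elemProd_of_sum {n : ℕ} (u v : Fin n × Fin n → Fin n ⊕ Fin n) (f : Fin n × Fin n → R)
    (huv : ∀ p q, v p ≠ u q) :
    IsElemProd (Matrix.reindex finSumFinEquiv finSumFinEquiv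
      ((1 : Matrix (Fin n ⊕ Fin n) (Fin n ⊕ Fin n) R) +
        ∑ p : Fin n × Fin n, Matrix.single (u p) (v p) (f p))) := by
  classical
  set L := (Finset.univ : Finset (Fin n × Fin n)).toList with hL
  refine ⟨L.map fun p => (1 : Matrix (Fin (n + n)) (Fin (n + n)) R) +
      Matrix.single (finSumFinEquiv (u p)) (finSumFinEquiv (v p)) (f p), ?_, ?_⟩
  · intro E hE
    simp only [List.mem_map] at hE
    obtain ⟨p, _, rfl⟩ := hE
    exact ⟨finSumFinEquiv (u p), finSumFinEquiv (v p),
      fun hh => huv p p (by simpa using (finSumFinEquiv.injective hh).symm), f p, rfl⟩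
  · rw [list_prod_one_add_std L _ _ f (fun p q h => huv p q (by
      exact finSumFinEquiv.injective (by simpa using h)))]
    have : ((L.map fun p => Matrix.single (finSumFinEquiv (u p))
        (finSumFinEquiv (v p)) (f p))).sum =
        ∑ p : Fin n × Fin n, Matrix.single (finSumFinEquiv (u p))
          (finSumFinEquiv (v p)) (f p) := list_sum_toList _ _
    rw [this, ← Matrix.reindexAlgEquiv_apply (R := R) (A := R), map_add, _root_.map_one, map_sum]
    congr 1
    exact Finset.sum_congr rfl fun p _ => by
      rw [Matrix.reindexAlgEquiv_apply, reindex_stdBasisMatrix]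

lemma elemProd_upperBlock {n : ℕ} (B : Matrix (Fin n) (Fin n) R) :
    IsElemProd (Matrix.reindex finSumFinEquiv finSumFinEquiv
      (Matrix.fromBlocks (1 : Matrix (Fin n) (Fin n) R) B 0 1)) := by
  rw [upper_eq_one_add]
  exact elemProd_of_sum _ _ _ (fun p q => by simp)

lemma elemProd_lowerBlock {n : ℕ} (C : Matrix (Fin n) (Fin n) R) :
    IsElemProd (Matrix.reindex finSumFinEquiv finSumFinEquiv
      (Matrix.fromBlocks (1 : Matrix (Fin n) (Fin n) R) 0 C 1)) := by
  rw [lower_eq_one_add]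
  exact elemProd_of_sum _ _ _ (fun p q => by simp)

/-- Whitehead's lemma at the matrix level: for an invertible matrix `A`, the block
diagonal matrix `diag(A, A⁻¹)` is a product of elementary matrices. -/
theorem stmt_1 {R : Type*} [CommRing R] {n : ℕ} (A : (Matrix (Fin n) (Fin n) R)ˣ) :
    IsElemProd (blockDiagSum (A : Matrix (Fin n) (Fin n) R) ((A⁻¹ : _) : Matrix (Fin n) (Fin n) R)) := by
  set A' : Matrix (Fin n) (Fin n) R := (A : Matrix (Fin n) (Fin n) R) with hA'
  set Ai : Matrix (Fin n) (Fin n) R := ((A⁻¹ : _) : Matrix (Fin n) (Fin n) R) with hAi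
  have h1 : A' * Ai = 1 := A.mul_inv
  have h2 : Ai * A' = 1 := A.inv_mul
  have key : Matrix.fromBlocks A' 0 0 Ai =
      Matrix.fromBlocks (1 : Matrix (Fin n) (Fin n) R) A' 0 1 *
      Matrix.fromBlocks (1 : Matrix (Fin n) (Fin n) R) 0 (-Ai) 1 *
      Matrix.fromBlocks (1 : Matrix (Fin n) (Fin n) R) A' 0 1 *
      Matrix.fromBlocks (1 : Matrix (Fin n) (Fin n) R) (-1) 0 1 *
      Matrix.fromBlocks (1 : Matrix (Fin n) (Fin n) R) 0 1 1 *
      Matrix.fromBlocks (1 : Matrix (Fin n) (Fin n) R) (-1) 0 1 := by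
    simp [Matrix.fromBlocks_multiply, h1, h2, Matrix.mul_neg, Matrix.neg_mul]
  rw [blockDiagSum, key, ← Matrix.reindexAlgEquiv_apply (R := R) (A := R)]
  rw [_root_.map_mul, _root_.map_mul, _root_.map_mul, _root_.map_mul, _root_.map_mul]
  simp only [Matrix.reindexAlgEquiv_apply]
  exact elemProd_mul (elemProd_mul (elemProd_mul (elemProd_mul (elemProd_mul
    (elemProd_upperBlock _) (elemProd_lowerBlock _)) (elemProd_upperBlock _))
    (elemProd_upperBlock _)) (elemProd_lowerBlock _)) (elemProd_upperBlock _)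
end

section
/- Let R be a commutative ring. A stably free R-module of rank 1 is free. That is, if L is a finitely generated projective R-module with L ⊕ Rⁿ ≅ R^{n+1}, then L ≅ R. -/
open Matrix

lemma rankone {R : Type*} [CommRing R] {n : ℕ}
    (A : Matrix (Fin n) (Fin (n+1)) R) (B : Matrix (Fin (n+1)) (Fin n) R)
    (hAB : A * B = 1) :
    ∃ c d : Fin (n+1) → R,
      (1 - B * A : Matrix (Fin (n+1)) (Fin (n+1)) R) = Matrix.of (fun i j => c i * d j) ∧
      d ⬝ᵥ c = 1 := by
  classical
  set σ : Fin n ⊕ Fin 1 ≃ Fin (n+1) := finSumFinEquiv with hσ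
  -- row-augmented and column-augmented square matrices
  set Arow : (Fin (n+1) → R) → Matrix (Fin n ⊕ Fin 1) (Fin n ⊕ Fin 1) R :=
    fun y => Matrix.of (fun i j => Sum.elim (fun i' => A i') (fun _ => y) i (σ j)) with hArow
  set Bcol : (Fin (n+1) → R) → Matrix (Fin n ⊕ Fin 1) (Fin n ⊕ Fin 1) R :=
    fun x => Matrix.of (fun i j => Sum.elim (fun j' => fun k => B k j') (fun _ => x) j (σ i)) with hBcol
  have hprod : ∀ x y : Fin (n+1) → R,
      Arow y * Bcol x =
        fromBlocks 1 (Matrix.of fun i (_ : Fin 1) => (A *ᵥ x) i)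
          (Matrix.of fun (_ : Fin 1) j => (y ᵥ* B) j) (Matrix.of fun _ _ => y ⬝ᵥ x) := by
    intro x y
    ext i j
    have base : ∀ (u v : Fin (n+1) → R),
        (∑ k : Fin n ⊕ Fin 1, u (σ k) * v (σ k)) = u ⬝ᵥ v := by
      intro u v
      simp only [dotProduct]
      exact Fintype.sum_equiv σ _ _ (fun k => rfl)
    cases i with
    | inl i' =>
      cases j with
      | inl j' =>
        have : (Arow y * Bcol x) (Sum.inl i') (Sum.inl j') = (A * B) i' j' := by
          simp only [Matrix.mul_apply, hArow, hBcol, Matrix.of_apply, Sum.elim_inl]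
          exact base (A i') (fun k => B k j')
        rw [this, hAB]
        rcases eq_or_ne i' j' with h | h <;>
          simp [fromBlocks, h, Matrix.one_apply]
      | inr j' =>
        have : (Arow y * Bcol x) (Sum.inl i') (Sum.inr j') = (A *ᵥ x) i' := by
          simp only [Matrix.mul_apply, hArow, hBcol, Matrix.of_apply, Sum.elim_inl, Sum.elim_inr]
          exact base (A i') x
        rw [this]; simp [fromBlocks]
    | inr i' =>
      cases j with
      | inl j' =>
        have : (Arow y * Bcol x) (Sum.inr i') (Sum.inl j') = (y ᵥ* B) j' := by
          simp only [Matrix.mul_apply, hArow, hBcol, Matrix.of_apply, Sum.elim_inl, Sum.elim_inr]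
          rw [base y (fun k => B k j')]
          simp [Matrix.vecMul, dotProduct]
        rw [this]; simp [fromBlocks]
      | inr j' =>
        have : (Arow y * Bcol x) (Sum.inr i') (Sum.inr j') = y ⬝ᵥ x := by
          simp only [Matrix.mul_apply, hArow, hBcol, Matrix.of_apply, Sum.elim_inr]
          exact base y x
        rw [this]; simp [fromBlocks]
  have hdet : ∀ x y : Fin (n+1) → R,
      det (Arow y) * det (Bcol x) = y ⬝ᵥ ((1 - B * A) *ᵥ x) := by
    intro x y
    rw [← det_mul, hprod, det_fromBlocks_one₁₁]
    rw [det_unique]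
    simp only [Matrix.sub_apply, dotProduct, Matrix.mulVec, Matrix.vecMul,
      Matrix.mul_apply, Matrix.of_apply, Matrix.one_apply, mul_sub, Finset.mul_sum,
      Finset.sum_sub_distrib, sub_mul, mul_sub, ite_mul, one_mul, zero_mul, mul_ite, mul_zero,
      mul_one, Finset.sum_ite_eq, Finset.mem_univ, if_true, Finset.sum_mul, Finset.mul_sum]
    congr 1
    conv_lhs => rw [Finset.sum_comm]
    conv_rhs => rw [Finset.sum_comm]
    refine Finset.sum_congr rfl fun i _ => ?_
    rw [Finset.sum_comm]
    refine Finset.sum_congr rfl fun k _ => ?_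
    refine Finset.sum_congr rfl fun j _ => ?_
    ring
  have hentry : ∀ i j, (1 - B * A : Matrix (Fin (n+1)) (Fin (n+1)) R) i j =
      det (Arow (Pi.single i 1)) * det (Bcol (Pi.single j 1)) := by
    intro i j
    rw [hdet (Pi.single j 1) (Pi.single i 1)]
    simp [dotProduct, Matrix.mulVec, Pi.single_apply, ite_mul, mul_ite, zero_mul,
      mul_zero, one_mul, mul_one, Finset.sum_ite_eq, Finset.sum_ite_eq']
  have h1 : Matrix.trace (1 - B * A : Matrix (Fin (n+1)) (Fin (n+1)) R) = 1 := by
    rw [Matrix.trace_sub, Matrix.trace_one, ← Matrix.trace_mul_comm, hAB, Matrix.trace_one]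
    simp only [Fintype.card_fin]
    push_cast
    ring
  refine ⟨fun i => det (Arow (Pi.single i 1)), fun j => det (Bcol (Pi.single j 1)), ?_, ?_⟩
  · ext i j
    rw [Matrix.of_apply, ← hentry]
  · rw [Matrix.trace] at h1
    simp only [Matrix.diag_apply] at h1
    simp only [dotProduct]
    refine Eq.trans (Finset.sum_congr rfl fun i _ => ?_) h1
    exact (mul_comm _ _).trans (hentry i i).symm

/-- A stably free module of rank 1 over a commutative ring is free:
if `L ⊕ Rⁿ ≃ R^(n+1)` then `L ≃ R`. -/
theorem stmt_17 (R : Type*) [CommRing R] (L : Type*) [AddCommGroup L] [Module R L]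
    [Module.Finite R L] [Module.Projective R L] (n : ℕ)
    (e : (L × (Fin n → R)) ≃ₗ[R] (Fin (n + 1) → R)) :
    Nonempty (L ≃ₗ[R] R) := by
  classical
  set i : L →ₗ[R] (Fin (n+1) → R) := e.toLinearMap ∘ₗ LinearMap.inl R L (Fin n → R) with hi
  set s : (Fin n → R) →ₗ[R] (Fin (n+1) → R) := e.toLinearMap ∘ₗ LinearMap.inr R L (Fin n → R)
    with hs
  set p : (Fin (n+1) → R) →ₗ[R] L := LinearMap.fst R L (Fin n → R) ∘ₗ e.symm.toLinearMap with hp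
  set f : (Fin (n+1) → R) →ₗ[R] (Fin n → R) :=
    LinearMap.snd R L (Fin n → R) ∘ₗ e.symm.toLinearMap with hf
  have hfs : ∀ y, f (s y) = y := fun y => by simp [hf, hs]
  have hpi : ∀ x, p (i x) = x := fun x => by simp [hp, hi]
  have hfi : ∀ x, f (i x) = 0 := fun x => by simp [hf, hi]
  have hip : ∀ v, i (p v) + s (f v) = v := fun v => by
    simp only [hi, hs, hp, hf, LinearMap.coe_comp, Function.comp_apply, LinearMap.inl_apply,
      LinearMap.inr_apply, LinearMap.fst_apply, LinearMap.snd_apply, LinearEquiv.coe_coe]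
    rw [← map_add]
    simp
  set A := LinearMap.toMatrix' f with hA
  set B := LinearMap.toMatrix' s with hB
  have hAv : ∀ v, A *ᵥ v = f v := fun v => by
    rw [hA, ← Matrix.toLin'_apply, Matrix.toLin'_toMatrix']
  have hAB : A * B = 1 := by
    rw [hA, hB, ← LinearMap.toMatrix'_comp, ← LinearMap.toMatrix'_id (R := R) (n := Fin n)]
    congr 1
    exact LinearMap.ext hfs
  obtain ⟨c, d, hP, hdc⟩ := rankone A B hAB
  have h0 : A * Matrix.of (fun i j => c i * d j) = 0 := by
    rw [← hP, Matrix.mul_sub, Matrix.mul_one, ← Matrix.mul_assoc, hAB, Matrix.one_mul, sub_self]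
  have hAc : A *ᵥ c = 0 := by
    funext k
    have h1 : ∀ j, (A *ᵥ c) k * d j = 0 := by
      intro j
      have := congrFun (congrFun h0 k) j
      simpa [Matrix.mul_apply, Matrix.mulVec, dotProduct, Finset.sum_mul,
        mul_assoc] using this
    have : (A *ᵥ c) k * (d ⬝ᵥ c) = 0 := by
      simp only [dotProduct, Finset.mul_sum]
      refine Finset.sum_eq_zero fun j _ => ?_
      rw [← mul_assoc, h1 j, zero_mul]
    rwa [hdc, mul_one] at this
  have hker : ∀ v : Fin (n+1) → R, A *ᵥ v = 0 → v = (d ⬝ᵥ v) • c := by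
    intro v hv
    have h2 : (1 - B * A) *ᵥ v = v := by
      rw [Matrix.sub_mulVec, Matrix.one_mulVec, ← Matrix.mulVec_mulVec, hv, Matrix.mulVec_zero,
        sub_zero]
    rw [hP] at h2
    funext k
    have := congrFun h2 k
    simp only [Matrix.mulVec, dotProduct, Matrix.of_apply, Pi.smul_apply,
      smul_eq_mul] at this ⊢
    rw [← this, Finset.sum_mul]
    exact Finset.sum_congr rfl fun j _ => by ring
  have hfc : f c = 0 := by rw [← hAv]; exact hAc
  have hic : i (p c) = c := by
    have h3 := hip c
    rwa [hfc, map_zero, add_zero] at h3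
  have hix : ∀ x : L, i x = (d ⬝ᵥ i x) • c := fun x => hker _ (by rw [hAv, hfi])
  set φ : L →ₗ[R] R :=
    { toFun := fun x => d ⬝ᵥ i x
      map_add' := fun x y => by simp [dotProduct_add]
      map_smul' := fun r x => by simp [dotProduct_smul] } with hφ
  set ψ : R →ₗ[R] L := LinearMap.toSpanSingleton R L (p c) with hψ
  refine ⟨LinearEquiv.ofLinear φ ψ ?_ ?_⟩
  · refine LinearMap.ext_ring ?_
    simp [hφ, hψ, LinearMap.toSpanSingleton_apply, hic, hdc]
  · refine LinearMap.ext fun x => ?_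
    simp only [LinearMap.coe_comp, Function.comp_apply, LinearMap.id_apply, hφ, hψ,
      LinearMap.coe_mk, AddHom.coe_mk, LinearMap.toSpanSingleton_apply]
    rw [← map_smul p, ← hix, hpi]
end
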